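/- Let ψ₁, …, ψ_N be a linearly independent family of unit vectors spanning ℂ^N, let ω₁, …, ω_N be the biorthogonal family (⟨ωᵢ, ψ_j⟩ = δ_ij), and let κ = 1 / λ_max, where λ_max is the largest eigenvalue of the positive definite matrix G = ∑ᵢ |ωᵢ⟩⟨ωᵢ|. Call a family (P₁, …, P_N, P_{N+1}) of positive semidefinite N×N matrices with ∑_{k=1}^{N+1} P_k = I an unambiguous POVM if ⟨ψᵢ, P_j ψᵢ⟩ = 0 for all i ≠ j with i, j ∈ {1,…,N}. Then: (1) setting Pᵢ = κ·|ωᵢ⟩⟨ωᵢ| for i ≤ N and P_{N+1} = I − κ·G defines an unambiguous POVM with min_{i≤N} ⟨ψᵢ, Pᵢ ψᵢ⟩ = κ; and (2) every unambiguous POVM (Q₁,…,Q_{N+1}) satisfies min_{i≤N} ⟨ψᵢ, Qᵢ ψᵢ⟩ ≤ κ. -/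

import Mathlib

open Matrix ComplexOrder

section Helpers

variable {N : ℕ}

private lemma vmv_mulVec (u v x : Fin N → ℂ) :
    vecMulVec u v *ᵥ x = (v ⬝ᵥ x) • u := by
  ext k
  simp only [mulVec, dotProduct, vecMulVec_apply, Pi.smul_apply, smul_eq_mul, Finset.sum_mul]
  exact Finset.sum_congr rfl fun j _ => by ring

private lemma star_dot_conj (x u : Fin N → ℂ) :
    star x ⬝ᵥ u = starRingEnd ℂ (star u ⬝ᵥ x) := by
  simp only [dotProduct, map_sum, Pi.star_apply, RCLike.star_def]
  exact Finset.sum_congr rfl fun j _ => by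
    rw [_root_.map_mul, Complex.conj_conj]; ring

private lemma psd_outer (u : Fin N → ℂ) : (vecMulVec u (star u)).PosSemidef := by
  apply PosSemidef.of_dotProduct_mulVec_nonneg
  · ext i j
    simp [conjTranspose_apply, vecMulVec_apply, mul_comm]
  · intro x
    rw [vmv_mulVec, dotProduct_smul, smul_eq_mul, star_dot_conj, mul_comm, Complex.mul_conj]
    exact Complex.zero_le_real.2 (Complex.normSq_nonneg _)

private lemma herm_dot {M : Matrix (Fin N) (Fin N) ℂ} (hM : M.IsHermitian) (x y : Fin N → ℂ) :
    star x ⬝ᵥ (M *ᵥ y) = star (M *ᵥ x) ⬝ᵥ y := by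
  rw [star_mulVec, hM.eq, ← dotProduct_mulVec]

private lemma sum_mulVec' {ι : Type*} (s : Finset ι) (f : ι → Matrix (Fin N) (Fin N) ℂ)
    (x : Fin N → ℂ) : (∑ i ∈ s, f i) *ᵥ x = ∑ i ∈ s, f i *ᵥ x := by
  ext k
  simp only [mulVec, dotProduct, Finset.sum_apply, Matrix.sum_apply, Finset.sum_mul]
  exact Finset.sum_comm

private lemma dot_sum (v : Fin N → ℂ) {ι : Type*} (s : Finset ι) (u : ι → Fin N → ℂ) :
    v ⬝ᵥ (∑ i ∈ s, u i) = ∑ i ∈ s, v ⬝ᵥ u i := by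
  simp only [dotProduct, Finset.sum_apply, Finset.mul_sum]
  exact Finset.sum_comm

/-- Expansion of a vector over a family `b` biorthogonal to `a`. -/
private lemma expand_biortho (a b : Fin N → Fin N → ℂ)
    (h : ∀ i j, star (a i) ⬝ᵥ b j = if i = j then 1 else 0) (x : Fin N → ℂ) :
    ∑ i, (star (a i) ⬝ᵥ x) • b i = x := by
  set A : Matrix (Fin N) (Fin N) ℂ := Matrix.of fun i k => starRingEnd ℂ (a i k) with hA
  set B : Matrix (Fin N) (Fin N) ℂ := Matrix.of fun k j => b j k with hB
  have hAB : A * B = 1 := by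
    ext i j
    rw [Matrix.mul_apply, Matrix.one_apply, ← h i j]
    simp [hA, hB, dotProduct]
  have hBA : B * A = 1 := mul_eq_one_comm.mp hAB
  have h1 : B *ᵥ (A *ᵥ x) = x := by rw [mulVec_mulVec, hBA, one_mulVec]
  have h2 : ∀ k, (B *ᵥ (A *ᵥ x)) k = ∑ i, (star (a i) ⬝ᵥ x) * b i k := by
    intro k
    simp only [hA, hB, mulVec, dotProduct, Matrix.of_apply, Pi.star_apply, RCLike.star_def]
    exact Finset.sum_congr rfl fun i _ => mul_comm _ _
  ext k
  rw [Finset.sum_apply]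
  simp only [Pi.smul_apply, smul_eq_mul]
  rw [← h2 k, h1]

end Helpers

/-- An unambiguous POVM for the pure states `ψ₁, …, ψ_N`: the `N` conclusive elements
`Q₁, …, Q_N` together with the inconclusive element `Qinc` are positive semidefinite, sum to
the identity, and never produce a wrong conclusive answer: `⟨ψᵢ, Q_j ψᵢ⟩ = 0` for `i ≠ j`. -/
def IsUnambPOVM {N : ℕ} (ψ : Fin N → (Fin N → ℂ))
    (Q : Fin N → Matrix (Fin N) (Fin N) ℂ) (Qinc : Matrix (Fin N) (Fin N) ℂ) : Prop :=
  (∀ i, (Q i).PosSemidef) ∧ Qinc.PosSemidef ∧ (∑ i, Q i) + Qinc = 1 ∧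
    ∀ i j, i ≠ j → star (ψ i) ⬝ᵥ (Q j *ᵥ ψ i) = 0

/-- Optimal minimax unambiguous discrimination: with `ωᵢ` the biorthogonal
family of `ψᵢ`, `G = ∑ᵢ |ωᵢ⟩⟨ωᵢ|`, and `κ = 1/λ_max(G)`, the family `Pᵢ = κ|ωᵢ⟩⟨ωᵢ|`,
`P_{N+1} = I − κG` is an unambiguous POVM achieving `min_i ⟨ψᵢ, Pᵢψᵢ⟩ = κ`, and every
unambiguous POVM satisfies `min_i ⟨ψᵢ, Qᵢψᵢ⟩ ≤ κ`. -/
theorem optimal_minimax_unambiguous_discrimination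
    {N : ℕ} (ψ ω : Fin N → (Fin N → ℂ))
    (hli : LinearIndependent ℂ ψ)
    (hspan : Submodule.span ℂ (Set.range ψ) = ⊤)
    (hunit : ∀ i, star (ψ i) ⬝ᵥ ψ i = 1)
    (hbi : ∀ i j, star (ω i) ⬝ᵥ ψ j = if i = j then 1 else 0)
    (G : Matrix (Fin N) (Fin N) ℂ)
    (hG : G = ∑ i, vecMulVec (ω i) (star (ω i)))
    (lmax : ℝ)
    (hlmax : IsGreatest { x : ℝ | ∃ v : Fin N → ℂ, v ≠ 0 ∧ G *ᵥ v = (x : ℂ) • v } lmax)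
    (κ : ℝ) (hκ : κ = 1 / lmax) :
    (IsUnambPOVM ψ (fun i => (κ : ℂ) • vecMulVec (ω i) (star (ω i))) (1 - (κ : ℂ) • G) ∧
      (⨅ i, (star (ψ i) ⬝ᵥ (((κ : ℂ) • vecMulVec (ω i) (star (ω i))) *ᵥ ψ i)).re) = κ) ∧
    ∀ (Q : Fin N → Matrix (Fin N) (Fin N) ℂ) (Qinc : Matrix (Fin N) (Fin N) ℂ),
      IsUnambPOVM ψ Q Qinc →
        (⨅ i, (star (ψ i) ⬝ᵥ (Q i *ᵥ ψ i)).re) ≤ κ := by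
  classical
  obtain ⟨v, hv0, hvE⟩ := hlmax.1
  have hNe : Nonempty (Fin N) := by
    rcases Nat.eq_zero_or_pos N with h | h
    · subst h; exact absurd (Subsingleton.elim v 0) hv0
    · exact ⟨⟨0, h⟩⟩
  -- reverse biorthogonality
  have hbi' : ∀ i j, star (ψ i) ⬝ᵥ ω j = if i = j then 1 else 0 := by
    intro i j
    rw [star_dot_conj, hbi j i]
    by_cases h : i = j
    · subst h; simp
    · simp [h, Ne.symm h]
  have hexpψ : ∀ x : Fin N → ℂ, ∑ i, (star (ω i) ⬝ᵥ x) • ψ i = x := expand_biortho ω ψ hbi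
  have hexpω : ∀ x : Fin N → ℂ, ∑ i, (star (ψ i) ⬝ᵥ x) • ω i = x := expand_biortho ψ ω hbi'
  -- data from the top eigenvector
  set S : ℝ := ∑ k, Complex.normSq (v k) with hS
  set T : ℝ := ∑ i, Complex.normSq (star (ω i) ⬝ᵥ v) with hT
  have hSv : star v ⬝ᵥ v = (S : ℂ) := by
    rw [hS]
    push_cast
    exact Finset.sum_congr rfl fun k _ => by
      simp only [Pi.star_apply, RCLike.star_def]
      rw [mul_comm, Complex.mul_conj]
  have hSpos : 0 < S := by
    obtain ⟨k, hk⟩ := Function.ne_iff.1 hv0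
    exact Finset.sum_pos' (fun k _ => Complex.normSq_nonneg _)
      ⟨k, Finset.mem_univ k, Complex.normSq_pos.2 hk⟩
  -- quadratic form of G at any vector
  have hGquad : ∀ x : Fin N → ℂ, star x ⬝ᵥ (G *ᵥ x)
      = ((∑ i, Complex.normSq (star (ω i) ⬝ᵥ x) : ℝ) : ℂ) := by
    intro x
    rw [hG, sum_mulVec', dot_sum]
    push_cast
    refine Finset.sum_congr rfl fun i _ => ?_
    rw [vmv_mulVec, dotProduct_smul, smul_eq_mul, star_dot_conj x (ω i), Complex.mul_conj]
  have hTS : T = lmax * S := by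
    have h1 : star v ⬝ᵥ (G *ᵥ v) = (T : ℂ) := hGquad v
    have h2 : star v ⬝ᵥ (G *ᵥ v) = ((lmax * S : ℝ) : ℂ) := by
      rw [hvE, dotProduct_smul, smul_eq_mul, hSv]
      push_cast; ring
    exact Complex.ofReal_injective (h1.symm.trans h2)
  have hTpos : 0 < T := by
    rcases (lt_or_eq_of_le (Finset.sum_nonneg
        (fun i (_ : i ∈ Finset.univ) => Complex.normSq_nonneg (star (ω i) ⬝ᵥ v)))) with h | h
    · exact h
    · exfalso
      have hci : ∀ i, star (ω i) ⬝ᵥ v = 0 := by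
        intro i
        have := (Finset.sum_eq_zero_iff_of_nonneg
          (fun i _ => Complex.normSq_nonneg (star (ω i) ⬝ᵥ v))).1 h.symm i (Finset.mem_univ i)
        exact Complex.normSq_eq_zero.1 this
      have : v = 0 := by
        rw [← hexpψ v]
        refine Finset.sum_eq_zero fun i _ => ?_
        rw [hci i, zero_smul]
      exact hv0 this
  have hlpos : 0 < lmax := by nlinarith
  have hκpos : 0 < κ := by rw [hκ]; positivity
  have hκl : (κ : ℂ) * (lmax : ℂ) = 1 := by
    rw [hκ]; push_cast; field_simp
  have hκlr : κ * lmax = 1 := by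
    rw [hκ]; field_simp
  -- Hermitian structure
  have hGh : G.IsHermitian := by
    rw [hG]
    exact (conjTranspose_sum _ _).trans
      (Finset.sum_congr rfl fun i _ => (psd_outer (ω i)).1)
  have hHh : ((lmax : ℂ) • 1 - G).IsHermitian := by
    unfold Matrix.IsHermitian
    rw [conjTranspose_sub, conjTranspose_smul, conjTranspose_one, hGh.eq,
      RCLike.star_def, Complex.conj_ofReal]
  -- PSD of lmax • 1 - G via eigenvalues
  have hHpsd : ((lmax : ℂ) • 1 - G).PosSemidef := by
    apply hHh.posSemidef_iff_eigenvalues_nonneg.mpr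
    intro i
    set μ := hHh.eigenvalues i with hμ
    set w : Fin N → ℂ := ⇑(hHh.eigenvectorBasis i) with hw
    have hw0 : w ≠ 0 := by
      intro h
      exact hHh.eigenvectorBasis.orthonormal.ne_zero i (by simpa [hw] using h)
    have hev : ((lmax : ℂ) • 1 - G) *ᵥ w = μ • w := hHh.mulVec_eigenvectorBasis i
    have hGw : G *ᵥ w = ((lmax - μ : ℝ) : ℂ) • w := by
      have h1 : ((lmax : ℂ) • 1 - G) *ᵥ w = (lmax : ℂ) • w - G *ᵥ w := by
        rw [sub_mulVec, smul_mulVec, one_mulVec]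
      have h2 : (μ • w : Fin N → ℂ) = (μ : ℂ) • w := by
        funext k
        simp [Complex.real_smul]
      rw [h1, h2] at hev
      rw [show ((lmax - μ : ℝ) : ℂ) = (lmax : ℂ) - (μ : ℂ) by push_cast; ring, sub_smul,
        ← hev]
      abel
    have := hlmax.2 ⟨w, hw0, hGw⟩
    rw [Pi.zero_apply]; linarith
  constructor
  · constructor
    · refine ⟨?_, ?_, ?_, ?_⟩
      · intro i
        refine PosSemidef.of_dotProduct_mulVec_nonneg ?_ fun x => ?_
        · unfold Matrix.IsHermitian
          rw [conjTranspose_smul, (psd_outer (ω i)).1.eq, RCLike.star_def, Complex.conj_ofReal]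
        · rw [smul_mulVec, dotProduct_smul, smul_eq_mul]
          exact mul_nonneg (Complex.zero_le_real.2 hκpos.le) ((psd_outer (ω i)).dotProduct_mulVec_nonneg x)
      · have hE : (1 : Matrix (Fin N) (Fin N) ℂ) - (κ : ℂ) • G
            = (κ : ℂ) • ((lmax : ℂ) • 1 - G) := by
          rw [smul_sub, smul_smul, hκl, one_smul]
        rw [hE]
        refine PosSemidef.of_dotProduct_mulVec_nonneg ?_ fun x => ?_
        · unfold Matrix.IsHermitian
          rw [conjTranspose_smul, hHh.eq, RCLike.star_def, Complex.conj_ofReal]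
        · rw [smul_mulVec, dotProduct_smul, smul_eq_mul]
          exact mul_nonneg (Complex.zero_le_real.2 hκpos.le) (hHpsd.dotProduct_mulVec_nonneg x)
      · rw [← Finset.smul_sum, ← hG]
        abel
      · intro i j hij
        rw [smul_mulVec, vmv_mulVec, dotProduct_smul, dotProduct_smul, hbi j i,
          if_neg (Ne.symm hij)]
        simp
    · have hdiag : ∀ i, star (ψ i) ⬝ᵥ (((κ : ℂ) • vecMulVec (ω i) (star (ω i))) *ᵥ ψ i)
          = (κ : ℂ) := by
        intro i
        rw [smul_mulVec, vmv_mulVec, dotProduct_smul, dotProduct_smul, hbi i i,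
          if_pos rfl, one_smul, smul_eq_mul, hbi' i i, if_pos rfl, mul_one]
      simp only [hdiag, Complex.ofReal_re]
      exact ciInf_const
  · intro Q Qinc hQ
    obtain ⟨hQpsd, hQincpsd, hsumQ, hun⟩ := hQ
    have hQψ : ∀ i j, i ≠ j → Q j *ᵥ ψ i = 0 := fun i j hij =>
      ((hQpsd j).dotProduct_mulVec_zero_iff (ψ i)).1 (hun i j hij)
    set q : Fin N → ℝ := fun j => (star (ψ j) ⬝ᵥ (Q j *ᵥ ψ j)).re with hq
    have hqval : ∀ j, star (ψ j) ⬝ᵥ (Q j *ᵥ ψ j) = ((q j : ℝ) : ℂ) := by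
      intro j
      have h0 := Complex.le_def.1 ((hQpsd j).dotProduct_mulVec_nonneg (ψ j))
      exact Complex.ext (by simp [hq]) (by simpa using h0.2.symm)
    have hQψj : ∀ j, Q j *ᵥ ψ j = ((q j : ℝ) : ℂ) • ω j := by
      intro j
      rw [← hexpω (Q j *ᵥ ψ j), Finset.sum_eq_single j]
      · rw [hqval j]
      · intro i _ hij
        have h0 : star (ψ i) ⬝ᵥ (Q j *ᵥ ψ j) = 0 := by
          rw [herm_dot (hQpsd j).1, hQψ i j hij]
          simp
        rw [h0, zero_smul]
      · intro h; exact absurd (Finset.mem_univ j) h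
    have hQv : ∀ j, star v ⬝ᵥ (Q j *ᵥ v)
        = ((q j * Complex.normSq (star (ω j) ⬝ᵥ v) : ℝ) : ℂ) := by
      intro j
      have hlin : Q j *ᵥ v = ∑ i, (star (ω i) ⬝ᵥ v) • (Q j *ᵥ ψ i) := by
        conv_lhs => rw [← hexpψ v]
        simp only [← mulVecLin_apply, map_sum, LinearMap.map_smul]
      rw [hlin, Finset.sum_eq_single j]
      · rw [hQψj j, dotProduct_smul, dotProduct_smul, smul_eq_mul, smul_eq_mul,
          star_dot_conj v (ω j)]
        push_cast
        rw [show star (ω j) ⬝ᵥ v * ((q j : ℂ) * starRingEnd ℂ (star (ω j) ⬝ᵥ v))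
            = (q j : ℂ) * (star (ω j) ⬝ᵥ v * starRingEnd ℂ (star (ω j) ⬝ᵥ v)) by ring,
          Complex.mul_conj]
      · intro i _ hij
        rw [hQψ i j hij, smul_zero]
      · intro h; exact absurd (Finset.mem_univ j) h
    have hrle : 0 ≤ (star v ⬝ᵥ (Qinc *ᵥ v)).re := by
      have := (Complex.le_def.1 (hQincpsd.dotProduct_mulVec_nonneg v)).1
      simpa using this
    have hsumv : (∑ j, q j * Complex.normSq (star (ω j) ⬝ᵥ v))
        + (star v ⬝ᵥ (Qinc *ᵥ v)).re = S := by
      have h1 : star v ⬝ᵥ (((∑ j, Q j) + Qinc) *ᵥ v) = (S : ℂ) := by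
        rw [hsumQ, one_mulVec, hSv]
      rw [add_mulVec, sum_mulVec', dotProduct_add, dot_sum] at h1
      have h2 := congrArg Complex.re h1
      simp only [Complex.add_re, Complex.re_sum, Complex.ofReal_re] at h2
      rw [← h2]
      congr 1
      exact Finset.sum_congr rfl fun j _ => by rw [hQv j, Complex.ofReal_re]
    -- conclude
    have hbdd : BddBelow (Set.range q) := Set.Finite.bddBelow (Set.finite_range q)
    have hm : ∀ j, (⨅ i, q i) ≤ q j := fun j => ciInf_le hbdd j
    set m : ℝ := ⨅ i, q i with hmdef
    have key : m * T ≤ S := by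
      have h2 : ∑ j, m * Complex.normSq (star (ω j) ⬝ᵥ v)
          ≤ ∑ j, q j * Complex.normSq (star (ω j) ⬝ᵥ v) :=
        Finset.sum_le_sum fun j _ =>
          mul_le_mul_of_nonneg_right (hm j) (Complex.normSq_nonneg _)
      have h3 : ∑ j, m * Complex.normSq (star (ω j) ⬝ᵥ v) = m * T := by
        rw [hT, Finset.mul_sum]
      linarith
    have hml : m * lmax ≤ 1 := by
      rw [hTS] at key
      nlinarith
    show m ≤ κ
    have : m * lmax ≤ κ * lmax := by rw [hκlr]; exact hml
    exact le_of_mul_le_mul_right this hlpos
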